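/- In the PoLoc setup, the number of challengers whose directional uncertainty in the true direction of Waldo falls below the true deviation is at most the number of Byzantine challengers: (Finset.univ.filter (fun i => R(C i, d̂ i, P̃, u) < dist P P̃)).card ≤ n − H.card. -/

import Mathlib

open scoped Classical

/-- The plane. -/
local notation "E" => EuclideanSpace ℝ (Fin 2)

/-- Directional uncertainty `R(C, d̂, P̃, u) = s + sqrt (d̂² − d̃² + s²)`,
where `d̃ = ‖C − P̃‖` and `s = ⟪C − P̃, u⟫_ℝ`. -/
noncomputable def dirUnc (C Pt : EuclideanSpace ℝ (Fin 2)) (dhat : ℝ)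
    (u : EuclideanSpace ℝ (Fin 2)) : ℝ :=
  (inner ℝ (C - Pt) u : ℝ) +
    Real.sqrt (dhat ^ 2 - ‖C - Pt‖ ^ 2 + (inner ℝ (C - Pt) u : ℝ) ^ 2)


/-- The number of challengers whose directional uncertainty in the true
direction of Waldo falls below the true deviation is at most the number of
Byzantine challengers. -/
theorem few_underestimating_challengers (n : ℕ) (C : Fin n → E) (dhat : Fin n → ℝ)
    (Pt P : E) (hne : P ≠ Pt) (H : Finset (Fin n))
    (hH : ∀ i ∈ H, dist (C i) P ≤ dhat i) :
    (Finset.univ.filter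
        (fun i => dirUnc (C i) Pt (dhat i) (‖P - Pt‖⁻¹ • (P - Pt)) < dist P Pt)).card
      ≤ n - H.card := by
  have key : ∀ i ∈ H,
      dist P Pt ≤ dirUnc (C i) Pt (dhat i) (‖P - Pt‖⁻¹ • (P - Pt)) := by
    intro i hi
    set x := C i - Pt with hx
    set v := P - Pt with hv
    have hr : ‖v‖ ≠ 0 := by
      simp [hv, sub_eq_zero, hne]
    have hrpos : (0:ℝ) < ‖v‖ := lt_of_le_of_ne (norm_nonneg v) (Ne.symm hr)
    set s : ℝ := (inner ℝ x (‖v‖⁻¹ • v) : ℝ) with hs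
    have hsv : s = ‖v‖⁻¹ * (inner ℝ x v : ℝ) := by
      rw [hs, real_inner_smul_right]
    have hdist : dist (C i) P = ‖x - v‖ := by
      rw [dist_eq_norm]; congr 1; simp only [hx, hv]; abel
    have hd : ‖x - v‖ ≤ dhat i := hdist ▸ hH i hi
    have hsq : ‖x - v‖ ^ 2 ≤ dhat i ^ 2 := by
      have := norm_nonneg (x - v)
      nlinarith
    have hexp : ‖x - v‖ ^ 2 = ‖x‖ ^ 2 - 2 * (inner ℝ x v : ℝ) + ‖v‖ ^ 2 := by
      rw [norm_sub_sq_real]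
    have hinner : (inner ℝ x v : ℝ) = s * ‖v‖ := by
      rw [hsv, mul_right_comm, inv_mul_cancel₀ hr, one_mul]
    have harg : (‖v‖ - s) ^ 2 ≤ dhat i ^ 2 - ‖x‖ ^ 2 + s ^ 2 := by
      nlinarith [hsq, hexp, hinner]
    have hsqrt : ‖v‖ - s ≤ Real.sqrt (dhat i ^ 2 - ‖x‖ ^ 2 + s ^ 2) := by
      calc ‖v‖ - s ≤ |‖v‖ - s| := le_abs_self _
        _ = Real.sqrt ((‖v‖ - s) ^ 2) := (Real.sqrt_sq_eq_abs _).symm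
        _ ≤ _ := Real.sqrt_le_sqrt harg
    have : dist P Pt = ‖v‖ := by rw [dist_eq_norm]
    rw [this]
    unfold dirUnc
    rw [← hs]
    linarith
  have hsub : (Finset.univ.filter
      (fun i => dirUnc (C i) Pt (dhat i) (‖P - Pt‖⁻¹ • (P - Pt)) < dist P Pt)) ⊆ Hᶜ := by
    intro i hi
    simp only [Finset.mem_filter] at hi
    simp only [Finset.mem_compl]
    intro hiH
    exact absurd (key i hiH) (not_le.mpr hi.2)
  calc _ ≤ Hᶜ.card := Finset.card_le_card hsub
    _ = n - H.card := by simp [Finset.card_compl]
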